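/- arXiv:1206.6186 — 4 statements merged into one kernel-verified Lean document; each statement's English description precedes it below -/
import Mathlib

section
/- The Wilson–Cowan equation is globally well posed in L²(D): for every initial datum ν₀ ∈ L²(D) there exists a unique continuously differentiable function ν : ℝ≥0 → L²(D) with ν(0) = ν₀ such that τ ν′(t) = −ν(t) + F(ν(t), t) for all t ≥ 0. -/
open MeasureTheory Set
open scoped NNReal ENNReal

section
variable {X : Type*} [MeasurableSpace X] {μ : Measure X}

private lemma wc_eLpNorm_two_aux {X : Type*} [MeasurableSpace X] (μ : Measure X) (f : X → ℝ) :
    eLpNorm f 2 μ = (∫⁻ x, (‖f x‖₊ : ℝ≥0∞) ^ (2:ℝ) ∂μ) ^ (1/2:ℝ) := by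
  rw [eLpNorm_eq_lintegral_rpow_enorm_toReal two_ne_zero ENNReal.ofNat_ne_top]
  simp only [enorm_eq_nnnorm]
  norm_num

private lemma wc_slice_aux {X : Type*} [MeasurableSpace X] {μ : Measure X} [SFinite μ]
    {w : X → X → ℝ} (hw : MemLp (fun p : X × X => w p.1 p.2) 2 (μ.prod μ)) :
    ∀ᵐ x ∂μ, MemLp (w x) 2 μ := by
  obtain ⟨hm, hfin⟩ := hw
  set W' := hm.mk _ with hW'
  have hWm : StronglyMeasurable W' := hm.stronglyMeasurable_mk
  have hae : ∀ᵐ x ∂μ, (fun y => w x y) =ᵐ[μ] fun y => W' (x, y) :=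
    Measure.ae_ae_of_ae_prod hm.ae_eq_mk
  have hGm : Measurable fun p : X × X => (‖W' p‖₊ : ℝ≥0∞) ^ (2:ℝ) :=
    (hWm.measurable.nnnorm.coe_nnreal_ennreal).pow_const _
  have hfin' : ∫⁻ x, ∫⁻ y, (‖W' (x, y)‖₊ : ℝ≥0∞) ^ (2:ℝ) ∂μ ∂μ < ∞ := by
    rw [← lintegral_prod _ hGm.aemeasurable]
    have hc : eLpNorm W' 2 (μ.prod μ) = eLpNorm (fun p : X × X => w p.1 p.2) 2 (μ.prod μ) :=
      eLpNorm_congr_ae hm.ae_eq_mk.symm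
    have hfin2 : eLpNorm W' 2 (μ.prod μ) < ∞ := hc ▸ hfin
    rw [wc_eLpNorm_two_aux] at hfin2
    by_contra hcon
    rw [not_lt, top_le_iff] at hcon
    rw [hcon] at hfin2
    simp at hfin2
  have hslice : ∀ᵐ x ∂μ, ∫⁻ y, (‖W' (x, y)‖₊ : ℝ≥0∞) ^ (2:ℝ) ∂μ < ∞ :=
    ae_lt_top (Measurable.lintegral_prod_right hGm) hfin'.ne
  filter_upwards [hae, hslice] with x hx1 hx2
  refine ⟨((hWm.comp_measurable (measurable_prodMk_left)).aestronglyMeasurable).congr hx1.symm, ?_⟩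
  rw [eLpNorm_congr_ae hx1, wc_eLpNorm_two_aux]
  exact ENNReal.rpow_lt_top_of_nonneg (by norm_num) hx2.ne

private lemma wc_core_aux {X : Type*} [MeasurableSpace X] {μ : Measure X} [SFinite μ]
    {w : X → X → ℝ} (hw : MemLp (fun p : X × X => w p.1 p.2) 2 (μ.prod μ))
    {u : X → ℝ} (hu : MemLp u 2 μ) :
    eLpNorm (fun x => ∫ y, w x y * u y ∂μ) 2 μ ≤
      eLpNorm (fun p : X × X => w p.1 p.2) 2 (μ.prod μ) * eLpNorm u 2 μ := by
  obtain ⟨hm, -⟩ := hw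
  set W' := hm.mk _ with hW'
  have hWm : StronglyMeasurable W' := hm.stronglyMeasurable_mk
  have hae : ∀ᵐ x ∂μ, (fun y => w x y) =ᵐ[μ] fun y => W' (x, y) :=
    Measure.ae_ae_of_ae_prod hm.ae_eq_mk
  set B2 : ℝ≥0∞ := ∫⁻ y, (‖u y‖₊ : ℝ≥0∞) ^ (2:ℝ) ∂μ with hB2
  set G : X → ℝ≥0∞ := fun x => ∫⁻ y, (‖W' (x, y)‖₊ : ℝ≥0∞) ^ (2:ℝ) ∂μ with hG
  have hGm2 : Measurable fun p : X × X => (‖W' p‖₊ : ℝ≥0∞) ^ (2:ℝ) :=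
    (hWm.measurable.nnnorm.coe_nnreal_ennreal).pow_const _
  have hGm : Measurable G := Measurable.lintegral_prod_right hGm2
  -- pointwise a.e. bound
  have hbd : ∀ᵐ x ∂μ, (‖∫ y, w x y * u y ∂μ‖₊ : ℝ≥0∞) ^ (2:ℝ) ≤ G x * B2 := by
    filter_upwards [hae] with x hx
    have h1 : (‖∫ y, w x y * u y ∂μ‖₊ : ℝ≥0∞) ≤ ∫⁻ y, ‖w x y * u y‖₊ ∂μ :=
      enorm_integral_le_lintegral_enorm _
    have h2 : ∫⁻ y, (‖w x y * u y‖₊ : ℝ≥0∞) ∂μ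
        = ∫⁻ y, (‖w x y‖₊ : ℝ≥0∞) * (‖u y‖₊ : ℝ≥0∞) ∂μ := by
      simp [nnnorm_mul, ENNReal.coe_mul]
    have hwxm : AEMeasurable (fun y => (‖w x y‖₊ : ℝ≥0∞)) μ := by
      refine AEMeasurable.congr (f := fun y => (‖W' (x, y)‖₊ : ℝ≥0∞)) ?_ ?_
      · exact ((hWm.comp_measurable measurable_prodMk_left).measurable.nnnorm.coe_nnreal_ennreal).aemeasurable
      · filter_upwards [hx] with y hy; rw [hy]
    have hum : AEMeasurable (fun y => (‖u y‖₊ : ℝ≥0∞)) μ := hu.1.enorm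
    have h3 := ENNReal.lintegral_mul_le_Lp_mul_Lq μ
      Real.HolderConjugate.two_two hwxm hum
    simp only [Pi.mul_apply] at h3
    have h4 : (∫⁻ y, (‖w x y‖₊ : ℝ≥0∞) ^ (2:ℝ) ∂μ) = G x := by
      refine lintegral_congr_ae ?_
      filter_upwards [hx] with y hy; rw [hy]
    have hchain : (‖∫ y, w x y * u y ∂μ‖₊ : ℝ≥0∞) ≤ (G x) ^ (1/2:ℝ) * B2 ^ (1/2:ℝ) := by
      calc (‖∫ y, w x y * u y ∂μ‖₊ : ℝ≥0∞) ≤ _ := h1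
        _ = _ := h2
        _ ≤ _ := h3
        _ = (G x) ^ (1/2:ℝ) * B2 ^ (1/2:ℝ) := by rw [h4]
    calc (‖∫ y, w x y * u y ∂μ‖₊ : ℝ≥0∞) ^ (2:ℝ)
        ≤ ((G x) ^ (1/2:ℝ) * B2 ^ (1/2:ℝ)) ^ (2:ℝ) :=
          ENNReal.rpow_le_rpow hchain (by norm_num)
      _ = G x * B2 := by
          rw [ENNReal.mul_rpow_of_nonneg _ _ (by norm_num), ← ENNReal.rpow_mul,
            ← ENNReal.rpow_mul]
          norm_num
  rw [wc_eLpNorm_two_aux μ]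
  have hGint : ∫⁻ x, G x * B2 ∂μ = (∫⁻ x, G x ∂μ) * B2 := lintegral_mul_const _ hGm
  have hWint : ∫⁻ x, G x ∂μ = ∫⁻ p : X × X, (‖w p.1 p.2‖₊ : ℝ≥0∞) ^ (2:ℝ) ∂(μ.prod μ) := by
    rw [← lintegral_prod _ hGm2.aemeasurable]
    refine lintegral_congr_ae ?_
    filter_upwards [hm.ae_eq_mk] with p hp
    rw [hp]
  calc (∫⁻ x, (‖∫ y, w x y * u y ∂μ‖₊ : ℝ≥0∞) ^ (2:ℝ) ∂μ) ^ (1/2:ℝ)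
      ≤ (∫⁻ x, G x * B2 ∂μ) ^ (1/2:ℝ) :=
        ENNReal.rpow_le_rpow (lintegral_mono_ae hbd) (by norm_num)
    _ = ((∫⁻ p : X × X, (‖w p.1 p.2‖₊ : ℝ≥0∞) ^ (2:ℝ) ∂(μ.prod μ)) * B2) ^ (1/2:ℝ) := by
        rw [hGint, hWint]
    _ = _ := by
        rw [ENNReal.mul_rpow_of_nonneg _ _ (by norm_num : (0:ℝ) ≤ 1/2),
          wc_eLpNorm_two_aux (μ.prod μ) (fun p : X × X => w p.1 p.2), wc_eLpNorm_two_aux μ u]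

private lemma wc_estLip [SFinite μ]
    {f : ℝ → ℝ} {L : ℝ≥0} (hfLip : LipschitzWith L f)
    {w : X → X → ℝ} (hw : MemLp (fun p : X × X => w p.1 p.2) 2 (μ.prod μ))
    {ι : X → ℝ} {g h Fg Fh : Lp ℝ 2 μ}
    (hFg : ⇑Fg =ᵐ[μ] fun x => f ((∫ y, w x y * g y ∂μ) + ι x))
    (hFh : ⇑Fh =ᵐ[μ] fun x => f ((∫ y, w x y * h y ∂μ) + ι x)) :
    ‖Fg - Fh‖ ≤ (L : ℝ) * (eLpNorm (fun p : X × X => w p.1 p.2) 2 (μ.prod μ)).toReal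
      * ‖g - h‖ := by
  have hpq : (1:ℝ≥0∞)/1 = 1/2 + 1/2 := by
    rw [ENNReal.div_add_div_same, one_div_one, one_add_one_eq_two]
    exact (ENNReal.div_self two_ne_zero ENNReal.ofNat_ne_top).symm
  have key : ∀ᵐ x ∂μ,
      (∫ y, w x y * g y ∂μ) - (∫ y, w x y * h y ∂μ) = ∫ y, w x y * (⇑(g - h)) y ∂μ := by
    filter_upwards [wc_slice_aux hw] with x hx
    have hig : Integrable (fun y => w x y * (g : X → ℝ) y) μ := by
      have := memLp_one_iff_integrable.mp ((Lp.memLp g).smul hx)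
      simpa [smul_eq_mul, Pi.mul_def] using this
    have hih : Integrable (fun y => w x y * (h : X → ℝ) y) μ := by
      have := memLp_one_iff_integrable.mp ((Lp.memLp h).smul hx)
      simpa [smul_eq_mul, Pi.mul_def] using this
    rw [← integral_sub hig hih]
    refine integral_congr_ae ?_
    filter_upwards [Lp.coeFn_sub g h] with y hy
    rw [hy]
    simp [mul_sub]
  have hmain : eLpNorm (⇑(Fg - Fh)) 2 μ ≤
      (L : ℝ≥0∞) * ((eLpNorm (fun p : X × X => w p.1 p.2) 2 (μ.prod μ))
        * eLpNorm (⇑(g - h)) 2 μ) := by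
    calc eLpNorm (⇑(Fg - Fh)) 2 μ
        = eLpNorm (fun x => f ((∫ y, w x y * g y ∂μ) + ι x)
            - f ((∫ y, w x y * h y ∂μ) + ι x)) 2 μ := by
          refine eLpNorm_congr_ae ?_
          filter_upwards [Lp.coeFn_sub Fg Fh, hFg, hFh] with x h1 h2 h3
          rw [h1, Pi.sub_apply, h2, h3]
      _ ≤ eLpNorm ((L : ℝ) • fun x => ∫ y, w x y * (⇑(g - h)) y ∂μ) 2 μ := by
          refine eLpNorm_mono_ae ?_
          filter_upwards [key] with x hx
          have h1 : ‖f ((∫ y, w x y * g y ∂μ) + ι x) - f ((∫ y, w x y * h y ∂μ) + ι x)‖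
              ≤ (L : ℝ) * ‖((∫ y, w x y * g y ∂μ) + ι x) - ((∫ y, w x y * h y ∂μ) + ι x)‖ := by
            have := hfLip.dist_le_mul ((∫ y, w x y * g y ∂μ) + ι x)
              ((∫ y, w x y * h y ∂μ) + ι x)
            simpa [dist_eq_norm] using this
          refine h1.trans ?_
          have h2 : ((∫ y, w x y * g y ∂μ) + ι x) - ((∫ y, w x y * h y ∂μ) + ι x)
              = ∫ y, w x y * (⇑(g - h)) y ∂μ := by rw [← hx]; ring
          rw [h2]
          simp [Real.norm_eq_abs, abs_mul, abs_of_nonneg L.coe_nonneg]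
      _ = ‖(L : ℝ)‖₊ * eLpNorm (fun x => ∫ y, w x y * (⇑(g - h)) y ∂μ) 2 μ :=
          eLpNorm_const_smul _ _ _ _
      _ ≤ (L : ℝ≥0∞) * ((eLpNorm (fun p : X × X => w p.1 p.2) 2 (μ.prod μ))
            * eLpNorm (⇑(g - h)) 2 μ) := by
          rw [NNReal.nnnorm_eq]
          exact mul_le_mul_right (wc_core_aux hw (Lp.memLp (g - h))) _
  have hne : (L : ℝ≥0∞) * ((eLpNorm (fun p : X × X => w p.1 p.2) 2 (μ.prod μ))
      * eLpNorm (⇑(g - h)) 2 μ) ≠ ∞ :=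
    ENNReal.mul_ne_top ENNReal.coe_ne_top
      (ENNReal.mul_ne_top hw.2.ne (Lp.eLpNorm_ne_top _))
  have := ENNReal.toReal_mono hne hmain
  rw [Lp.norm_def, Lp.norm_def]
  rw [ENNReal.toReal_mul, ENNReal.toReal_mul] at this
  simpa [mul_assoc] using this

private lemma wc_estT {f : ℝ → ℝ} {L : ℝ≥0} (hfLip : LipschitzWith L f)
    {a : X → ℝ} {ι₁ ι₂ Fg Fh : Lp ℝ 2 μ}
    (hFg : ⇑Fg =ᵐ[μ] fun x => f (a x + ι₁ x))
    (hFh : ⇑Fh =ᵐ[μ] fun x => f (a x + ι₂ x)) :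
    ‖Fg - Fh‖ ≤ (L : ℝ) * ‖ι₁ - ι₂‖ := by
  refine Lp.norm_le_mul_norm_of_ae_le_mul ?_
  filter_upwards [Lp.coeFn_sub Fg Fh, Lp.coeFn_sub ι₁ ι₂, hFg, hFh] with x h1 h2 h3 h4
  rw [h1, h2, Pi.sub_apply, Pi.sub_apply, h3, h4]
  have := hfLip.dist_le_mul (a x + ι₁ x) (a x + ι₂ x)
  simpa [dist_eq_norm] using this

private lemma wc_estB [IsFiniteMeasure μ] {f : ℝ → ℝ} {M : ℝ} (hfBdd : ∀ z, |f z| ≤ M)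
    {b : X → ℝ} {Fg : Lp ℝ 2 μ} (hFg : ⇑Fg =ᵐ[μ] fun x => f (b x)) :
    ‖Fg‖ ≤ ((μ Set.univ) ^ (2:ℝ≥0∞).toReal⁻¹).toReal * M := by
  have hM : 0 ≤ M := (abs_nonneg _).trans (hfBdd 0)
  have h1 : eLpNorm (⇑Fg) 2 μ ≤ μ Set.univ ^ (2:ℝ≥0∞).toReal⁻¹ * ENNReal.ofReal M := by
    rw [eLpNorm_congr_ae hFg]
    exact eLpNorm_le_of_ae_bound (Filter.Eventually.of_forall fun x => by
      simpa [Real.norm_eq_abs] using hfBdd (b x))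
  have hne : μ Set.univ ^ (2:ℝ≥0∞).toReal⁻¹ * ENNReal.ofReal M ≠ ∞ :=
    ENNReal.mul_ne_top (ENNReal.rpow_ne_top_of_nonneg (by positivity) (measure_ne_top μ _))
      ENNReal.ofReal_ne_top
  have := ENNReal.toReal_mono hne h1
  rw [Lp.norm_def]
  rwa [ENNReal.toReal_mul, ENNReal.toReal_ofReal hM] at this
end

private lemma wc_hasDerivWithinAt_singleton {E : Type*} [NormedAddCommGroup E]
    [NormedSpace ℝ E] (f : ℝ → E) (x : ℝ) (d : E) : HasDerivWithinAt f d {x} x := by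
  rw [hasDerivWithinAt_iff_hasFDerivWithinAt]
  simp only [HasFDerivWithinAt, nhdsWithin_singleton, hasFDerivAtFilter_iff_isLittleO,
    Asymptotics.isLittleO_pure]
  simp

set_option maxHeartbeats 2000000 in
/-- Global well-posedness of the Wilson–Cowan equation in `L²(D)`:
for every initial datum `ν₀ ∈ L²(D)` there is a unique continuously differentiable
`ν : ℝ≥0 → L²(D)` with `ν 0 = ν₀` and `τ ν'(t) = −ν(t) + F(ν(t), t)` for all `t ≥ 0`. -/
theorem wilson_cowan_well_posed
    {d : ℕ} (D : Set (EuclideanSpace ℝ (Fin d)))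
    (hDmeas : MeasurableSet D) (hDbdd : Bornology.IsBounded D)
    (f : ℝ → ℝ) (L : ℝ≥0) (hfLip : LipschitzWith L f)
    (M : ℝ) (hfBdd : ∀ z : ℝ, |f z| ≤ M)
    (w : EuclideanSpace ℝ (Fin d) → EuclideanSpace ℝ (Fin d) → ℝ)
    (hw : MemLp (fun p : EuclideanSpace ℝ (Fin d) × EuclideanSpace ℝ (Fin d) => w p.1 p.2) 2
      ((volume.restrict D).prod (volume.restrict D)))
    (I : ℝ → Lp ℝ 2 (volume.restrict D)) (hI : ContinuousOn I (Set.Ici 0))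
    (F : Lp ℝ 2 (volume.restrict D) → ℝ → Lp ℝ 2 (volume.restrict D))
    (hF : ∀ (g : Lp ℝ 2 (volume.restrict D)) (t : ℝ),
      (F g t : EuclideanSpace ℝ (Fin d) → ℝ) =ᵐ[volume.restrict D]
        fun x => f ((∫ y in D, w x y * g y) + I t x))
    (τ : ℝ) (hτ : 0 < τ)
    (ν₀ : Lp ℝ 2 (volume.restrict D)) :
    ∃ ν : ℝ → Lp ℝ 2 (volume.restrict D),
      ν 0 = ν₀ ∧
      (∀ t ∈ Set.Ici (0 : ℝ),
        HasDerivWithinAt ν (τ⁻¹ • (-ν t + F (ν t) t)) (Set.Ici 0) t) ∧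
      ContinuousOn (fun t => τ⁻¹ • (-ν t + F (ν t) t)) (Set.Ici 0) ∧
      (∀ ν' : ℝ → Lp ℝ 2 (volume.restrict D), ν' 0 = ν₀ →
        (∀ t ∈ Set.Ici (0 : ℝ),
          HasDerivWithinAt ν' (τ⁻¹ • (-ν' t + F (ν' t) t)) (Set.Ici 0) t) →
        ∀ t ∈ Set.Ici (0 : ℝ), ν' t = ν t) := by
  classical
  haveI : IsFiniteMeasure (volume.restrict D) :=
    ⟨by rw [Measure.restrict_apply_univ]; exact hDbdd.measure_lt_top⟩
  set M' : ℝ := (((volume.restrict D) Set.univ) ^ (2:ℝ≥0∞).toReal⁻¹).toReal * M with hM'def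
  have hM'0 : 0 ≤ M' := by
    have hM : 0 ≤ M := (abs_nonneg _).trans (hfBdd 0)
    positivity
  set W : ℝ := (eLpNorm
    (fun p : EuclideanSpace ℝ (Fin d) × EuclideanSpace ℝ (Fin d) => w p.1 p.2) 2
    ((volume.restrict D).prod (volume.restrict D))).toReal with hWdef
  have hW0 : 0 ≤ W := ENNReal.toReal_nonneg
  set v : ℝ → Lp ℝ 2 (volume.restrict D) → Lp ℝ 2 (volume.restrict D) := fun t g => τ⁻¹ • (-g + F g t) with hvdef
  have hτ' : 0 < τ⁻¹ := inv_pos.mpr hτ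
  -- F estimates
  have hFLip : ∀ (t : ℝ) (g h : Lp ℝ 2 (volume.restrict D)), ‖F g t - F h t‖ ≤ (L:ℝ) * W * ‖g - h‖ :=
    fun t g h => wc_estLip hfLip hw (hF g t) (hF h t)
  have hFt : ∀ (g : Lp ℝ 2 (volume.restrict D)) (t s : ℝ), ‖F g t - F g s‖ ≤ (L:ℝ) * ‖I t - I s‖ :=
    fun g t s => wc_estT hfLip (hF g t) (hF g s)
  have hFB : ∀ (g : Lp ℝ 2 (volume.restrict D)) (t : ℝ), ‖F g t‖ ≤ M' :=
    fun g t => wc_estB hfBdd (hF g t)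
  -- bound for v
  have hvB : ∀ (t : ℝ) (g : Lp ℝ 2 (volume.restrict D)), ‖v t g‖ ≤ τ⁻¹ * (‖g‖ + M') := by
    intro t g
    rw [hvdef]
    simp only
    rw [norm_smul, Real.norm_eq_abs, abs_of_nonneg hτ'.le]
    refine mul_le_mul_of_nonneg_left ?_ hτ'.le
    refine (norm_add_le _ _).trans ?_
    rw [norm_neg]
    exact add_le_add_right (hFB g t) _
  -- Lipschitz constant for v
  have hKr0 : 0 ≤ τ⁻¹ * (1 + (L:ℝ) * W) := by positivity
  set K : ℝ≥0 := (τ⁻¹ * (1 + (L:ℝ) * W)).toNNReal with hKdef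
  have hKcoe : (K : ℝ) = τ⁻¹ * (1 + (L:ℝ) * W) := Real.coe_toNNReal _ hKr0
  have hvLip : ∀ t : ℝ, LipschitzWith K (v t) := by
    intro t
    refine LipschitzWith.of_dist_le_mul fun g h => ?_
    rw [dist_eq_norm, dist_eq_norm, hKcoe]
    have h1 : v t g - v t h = τ⁻¹ • ((h - g) + (F g t - F h t)) := by
      rw [hvdef]; simp only; rw [← smul_sub]; congr 1; abel
    rw [h1, norm_smul, Real.norm_eq_abs, abs_of_nonneg hτ'.le, mul_assoc]
    refine mul_le_mul_of_nonneg_left ?_ hτ'.le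
    calc ‖(h - g) + (F g t - F h t)‖ ≤ ‖h - g‖ + ‖F g t - F h t‖ := norm_add_le _ _
      _ ≤ ‖g - h‖ + (L:ℝ) * W * ‖g - h‖ := by
          rw [norm_sub_rev h g]; exact add_le_add_right (hFLip t g h) _
      _ = (1 + (L:ℝ) * W) * ‖g - h‖ := by ring
  -- continuity of t ↦ F (γ t) t along continuous curves
  have hFcont : ∀ γ : ℝ → Lp ℝ 2 (volume.restrict D), ContinuousOn γ (Ici 0) →
      ContinuousOn (fun t => F (γ t) t) (Ici 0) := by
    intro γ hγ t ht
    have hb : ∀ s : ℝ, dist (F (γ s) s) (F (γ t) t)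
        ≤ (L:ℝ) * W * dist (γ s) (γ t) + (L:ℝ) * dist (I s) (I t) := by
      intro s
      calc dist (F (γ s) s) (F (γ t) t)
          ≤ dist (F (γ s) s) (F (γ t) s) + dist (F (γ t) s) (F (γ t) t) :=
            dist_triangle _ _ _
        _ ≤ (L:ℝ) * W * dist (γ s) (γ t) + (L:ℝ) * dist (I s) (I t) := by
            refine add_le_add ?_ ?_
            · rw [dist_eq_norm, dist_eq_norm]; exact hFLip s (γ s) (γ t)
            · rw [dist_eq_norm, dist_eq_norm]; exact hFt (γ t) s t
    have h0 : Filter.Tendsto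
        (fun s => (L:ℝ) * W * dist (γ s) (γ t) + (L:ℝ) * dist (I s) (I t))
        (nhdsWithin t (Ici 0)) (nhds 0) := by
      have h1 : Filter.Tendsto (fun s => dist (γ s) (γ t)) (nhdsWithin t (Ici 0))
          (nhds 0) := by
        have := (hγ t ht).dist (tendsto_const_nhds (x := γ t)
          (f := nhdsWithin t (Ici (0:ℝ))))
        simpa using this
      have h2 : Filter.Tendsto (fun s => dist (I s) (I t)) (nhdsWithin t (Ici 0))
          (nhds 0) := by
        have := (hI t ht).dist (tendsto_const_nhds (x := I t)
          (f := nhdsWithin t (Ici (0:ℝ))))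
        simpa using this
      have := (h1.const_mul ((L:ℝ) * W)).add (h2.const_mul (L:ℝ))
      simpa using this
    exact tendsto_iff_dist_tendsto_zero.mpr
      (squeeze_zero (fun s => dist_nonneg) (fun s => hb s) h0)
  have hvcont : ∀ γ : ℝ → Lp ℝ 2 (volume.restrict D), ContinuousOn γ (Ici 0) →
      ContinuousOn (fun t => τ⁻¹ • (-γ t + F (γ t) t)) (Ici 0) := by
    intro γ hγ
    exact (hγ.neg.add (hFcont γ hγ)).const_smul τ⁻¹
  have hvcontT : ∀ g : Lp ℝ 2 (volume.restrict D), ContinuousOn (fun t => v t g) (Ici 0) := by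
    intro g
    have := hvcont (fun _ => g) continuousOn_const
    rw [hvdef]
    exact this
  -- local existence step
  have step : ∀ T : ℝ, 0 ≤ T → ∀ x₁ : Lp ℝ 2 (volume.restrict D), ∃ σ : ℝ → Lp ℝ 2 (volume.restrict D), σ T = x₁ ∧
      ∀ t ∈ Icc T (T + τ/2), HasDerivWithinAt σ (v t (σ t)) (Icc T (T + τ/2)) t := by
    intro T hT x₁
    refine IsPicardLindelof.exists_eq_forall_mem_Icc_hasDerivWithinAt₀
      (t₀ := ⟨T, le_rfl, by linarith⟩) (x₀ := x₁) (K := K)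
      (a := ⟨‖x₁‖ + M' + 1, by positivity⟩) (L := ⟨τ⁻¹ * (2*‖x₁‖ + 2*M' + 1), by positivity⟩) ?_
    constructor
    · exact fun t _ => (hvLip t).lipschitzOnWith
    · exact fun x _ => (hvcontT x).mono (fun s hs => le_trans hT hs.1)
    · intro t ht x hx
      have h1 : ‖x - x₁‖ ≤ ‖x₁‖ + M' + 1 := mem_closedBall_iff_norm.mp hx
      have h2 : ‖x‖ - ‖x₁‖ ≤ ‖x - x₁‖ := norm_sub_norm_le x x₁
      refine (hvB t x).trans ?_
      show _ ≤ τ⁻¹ * (2*‖x₁‖ + 2*M' + 1)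
      refine mul_le_mul_of_nonneg_left ?_ hτ'.le
      linarith
    · show τ⁻¹ * (2*‖x₁‖ + 2*M' + 1) * max (T + τ/2 - T) (T - T)
          ≤ (‖x₁‖ + M' + 1) - ((0:ℝ≥0):ℝ)
      rw [NNReal.coe_zero, sub_zero]
      have hmax : max (T + τ/2 - T) (T - T) = τ/2 := by
        rw [show T + τ/2 - T = τ/2 by ring, sub_self, max_eq_left (by linarith)]
      rw [hmax]
      have heq : τ⁻¹ * (2*‖x₁‖ + 2*M' + 1) * (τ/2) = ‖x₁‖ + M' + 1/2 := by
        field_simp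
      rw [heq]
      linarith
  -- solutions on [0, n τ/2]
  have sol : ∀ n : ℕ, ∃ σ : ℝ → Lp ℝ 2 (volume.restrict D), σ 0 = ν₀ ∧
      ∀ t ∈ Icc (0:ℝ) ((n:ℝ)*(τ/2)), HasDerivWithinAt σ (v t (σ t)) (Icc 0 ((n:ℝ)*(τ/2))) t := by
    intro n
    induction n with
    | zero =>
      refine ⟨fun _ => ν₀, rfl, ?_⟩
      intro t ht
      simp only [Nat.cast_zero, zero_mul, Icc_self] at ht ⊢
      have ht' : t = 0 := ht
      subst ht'
      exact wc_hasDerivWithinAt_singleton _ _ _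
    | succ n ih =>
      obtain ⟨σ₁, hσ₁0, hσ₁d⟩ := ih
      set T : ℝ := (n:ℝ) * (τ/2) with hTdef
      have hT0 : 0 ≤ T := by positivity
      obtain ⟨σ₂, hσ₂T, hσ₂d⟩ := step T hT0 (σ₁ T)
      have hTs : ((n:ℕ).succ : ℝ) * (τ/2) = T + τ/2 := by
        push_cast; ring
      refine ⟨fun t => if t ≤ T then σ₁ t else σ₂ t, by simp [hT0, hσ₁0], ?_⟩
      rw [hTs]
      intro t ht
      rcases lt_trichotomy t T with hlt | heq | hgt
      · -- t < T
        have hmem : Icc (0:ℝ) T ∈ nhdsWithin t (Icc 0 (T + τ/2)) := by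
          refine mem_nhdsWithin.mpr ⟨Iio T, isOpen_Iio, hlt, ?_⟩
          rintro s ⟨hs1, hs2⟩
          exact ⟨hs2.1, hs1.le⟩
        have h1 : HasDerivWithinAt σ₁ (v t (σ₁ t)) (Icc 0 (T + τ/2)) t :=
          (hσ₁d t ⟨ht.1, hlt.le⟩).mono_of_mem_nhdsWithin hmem
        have hev : (fun s => if s ≤ T then σ₁ s else σ₂ s) =ᶠ[nhdsWithin t (Icc 0 (T + τ/2))]
            σ₁ := by
          refine Filter.eventually_of_mem (nhdsWithin_le_nhds (Iic_mem_nhds hlt)) ?_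
          intro s hs
          simp [mem_Iic.mp hs]
        have h2 := h1.congr_of_eventuallyEq hev (by simp [hlt.le])
        simpa [hlt.le] using h2
      · -- t = T
        subst heq
        have hA : HasDerivWithinAt (fun s => if s ≤ T then σ₁ s else σ₂ s)
            (v T (if T ≤ T then σ₁ T else σ₂ T)) (Icc 0 T) T := by
          have h1 := hσ₁d T ⟨hT0, le_rfl⟩
          refine (h1.congr (fun s hs => by simp [hs.2]) (by simp)).congr_deriv ?_
          simp
        have hB : HasDerivWithinAt (fun s => if s ≤ T then σ₁ s else σ₂ s)
            (v T (if T ≤ T then σ₁ T else σ₂ T)) (Icc T (T + τ/2)) T := by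
          have h1 := hσ₂d T ⟨le_rfl, by linarith⟩
          refine (h1.congr ?_ ?_).congr_deriv ?_
          · intro s hs
            by_cases hsT : s ≤ T
            · have : s = T := le_antisymm hsT hs.1
              simp [this, hσ₂T]
            · simp [hsT]
          · simp [hσ₂T]
          · simp [hσ₂T]
        have := hA.union hB
        rwa [Icc_union_Icc_eq_Icc hT0 (by linarith)] at this
      · -- T < t
        have hmem : Icc T (T + τ/2) ∈ nhdsWithin t (Icc 0 (T + τ/2)) := by
          refine mem_nhdsWithin.mpr ⟨Ioi T, isOpen_Ioi, hgt, ?_⟩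
          rintro s ⟨hs1, hs2⟩
          exact ⟨le_of_lt hs1, hs2.2⟩
        have h1 : HasDerivWithinAt σ₂ (v t (σ₂ t)) (Icc 0 (T + τ/2)) t :=
          (hσ₂d t ⟨hgt.le, ht.2⟩).mono_of_mem_nhdsWithin hmem
        have hev : (fun s => if s ≤ T then σ₁ s else σ₂ s) =ᶠ[nhdsWithin t (Icc 0 (T + τ/2))]
            σ₂ := by
          refine Filter.eventually_of_mem (nhdsWithin_le_nhds (Ioi_mem_nhds hgt)) ?_
          intro s hs
          simp [not_le.mpr (show T < s from hs)]
        have h2 := h1.congr_of_eventuallyEq hev (by simp [not_le.mpr hgt])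
        simpa [not_le.mpr hgt] using h2
  -- uniqueness on compact intervals
  have huniq : ∀ (a : ℝ) (σ₁ σ₂ : ℝ → Lp ℝ 2 (volume.restrict D)),
      ContinuousOn σ₁ (Icc 0 a) → (∀ t ∈ Ico 0 a, HasDerivWithinAt σ₁ (v t (σ₁ t)) (Ici t) t) →
      ContinuousOn σ₂ (Icc 0 a) → (∀ t ∈ Ico 0 a, HasDerivWithinAt σ₂ (v t (σ₂ t)) (Ici t) t) →
      σ₁ 0 = σ₂ 0 → EqOn σ₁ σ₂ (Icc 0 a) :=
    fun a σ₁ σ₂ h1 h2 h3 h4 h5 => ODE_solution_unique hvLip h1 h2 h3 h4 h5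
  -- converting Icc-solutions to the form needed by huniq
  have hconv : ∀ (a b : ℝ) (σ : ℝ → Lp ℝ 2 (volume.restrict D)), a ≤ b →
      (∀ t ∈ Icc (0:ℝ) b, HasDerivWithinAt σ (v t (σ t)) (Icc 0 b) t) →
      (∀ t ∈ Ico (0:ℝ) a, HasDerivWithinAt σ (v t (σ t)) (Ici t) t) := by
    intro a b σ hab hd t ht
    have hmem : Icc (0:ℝ) b ∈ nhdsWithin t (Ici t) := by
      refine mem_nhdsWithin.mpr ⟨Iio b, isOpen_Iio, lt_of_lt_of_le ht.2 hab, ?_⟩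
      rintro s ⟨hs1, hs2⟩
      exact ⟨le_trans ht.1 hs2, hs1.le⟩
    exact (hd t ⟨ht.1, le_trans ht.2.le hab⟩).mono_of_mem_nhdsWithin hmem
  set S : ℕ → ℝ → Lp ℝ 2 (volume.restrict D) := fun n => (sol n).choose with hSdef
  have hS0 : ∀ n, S n 0 = ν₀ := fun n => (sol n).choose_spec.1
  have hSd : ∀ n : ℕ, ∀ t ∈ Icc (0:ℝ) ((n:ℝ)*(τ/2)),
      HasDerivWithinAt (S n) (v t (S n t)) (Icc 0 ((n:ℝ)*(τ/2))) t :=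
    fun n => (sol n).choose_spec.2
  have hScont : ∀ n : ℕ, ContinuousOn (S n) (Icc (0:ℝ) ((n:ℝ)*(τ/2))) :=
    fun n t ht => ((hSd n) t ht).continuousWithinAt
  have hagree : ∀ m n : ℕ, m ≤ n → EqOn (S m) (S n) (Icc 0 ((m:ℝ)*(τ/2))) := by
    intro m n hmn
    have hle : (m:ℝ) * (τ/2) ≤ (n:ℝ) * (τ/2) := by
      have : (m:ℝ) ≤ n := Nat.cast_le.mpr hmn
      nlinarith
    refine huniq ((m:ℝ)*(τ/2)) (S m) (S n) (hScont m)
      (hconv _ _ _ le_rfl (hSd m)) ((hScont n).mono (Icc_subset_Icc le_rfl hle))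
      (hconv _ _ _ hle (hSd n)) ?_
    rw [hS0, hS0]
  set h2 : ℝ := τ/2 with hh2
  have hh2pos : 0 < h2 := by positivity
  set ν : ℝ → Lp ℝ 2 (volume.restrict D) := fun t => S (⌈t / h2⌉₊ + 1) t with hνdef
  have hself : ∀ t : ℝ, 0 ≤ t → t ≤ ((⌈t / h2⌉₊ + 1 : ℕ):ℝ) * h2 := by
    intro t ht
    have h1 : t / h2 ≤ (⌈t / h2⌉₊ : ℝ) := Nat.le_ceil _
    have h2' : t ≤ (⌈t / h2⌉₊ : ℝ) * h2 := by
      rw [div_le_iff₀ hh2pos] at h1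
      exact h1
    push_cast
    nlinarith
  have hEq : ∀ n : ℕ, EqOn ν (S n) (Icc 0 ((n:ℝ)*h2)) := by
    intro n s hs
    have hm := hself s hs.1
    rcases le_total (⌈s / h2⌉₊ + 1) n with hc | hc
    · exact hagree _ n hc ⟨hs.1, hm⟩
    · exact (hagree n _ hc hs).symm
  have hν0 : ν 0 = ν₀ := hS0 _
  have hlt : ∀ t : ℝ, 0 ≤ t → t < ((⌈t / h2⌉₊ + 1 : ℕ):ℝ) * h2 := by
    intro t ht
    have h1 : t ≤ (⌈t / h2⌉₊ : ℝ) * h2 := by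
      have := Nat.le_ceil (t / h2)
      rw [div_le_iff₀ hh2pos] at this
      exact this
    push_cast
    nlinarith
  have hkey : ∀ t ∈ Ici (0:ℝ), HasDerivWithinAt ν (v t (ν t)) (Ici 0) t := by
    intro t ht
    set n : ℕ := ⌈t / h2⌉₊ + 1 with hndef
    have htn : t < (n:ℝ) * h2 := hlt t ht
    have htmem : t ∈ Icc (0:ℝ) ((n:ℝ)*h2) := ⟨ht, htn.le⟩
    have hmem : Icc (0:ℝ) ((n:ℝ)*h2) ∈ nhdsWithin t (Ici 0) := by
      refine mem_nhdsWithin.mpr ⟨Iio ((n:ℝ)*h2), isOpen_Iio, htn, ?_⟩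
      rintro s ⟨hs1, hs2⟩
      exact ⟨hs2, hs1.le⟩
    have h1 : HasDerivWithinAt (S n) (v t (S n t)) (Ici 0) t :=
      ((hSd n) t htmem).mono_of_mem_nhdsWithin hmem
    have hev : ν =ᶠ[nhdsWithin t (Ici 0)] S n :=
      Filter.eventuallyEq_of_mem hmem (hEq n)
    have h2' := h1.congr_of_eventuallyEq hev (hEq n htmem)
    rwa [← hEq n htmem] at h2'
  have hνcont : ContinuousOn ν (Ici 0) := fun t ht => (hkey t ht).continuousWithinAt
  refine ⟨ν, hν0, ?_, ?_, ?_⟩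
  · intro t ht
    exact hkey t ht
  · exact hvcont ν hνcont
  · intro ν' hν'0 hν'd t ht
    have hd1 : ∀ s ∈ Ico (0:ℝ) t, HasDerivWithinAt ν' (v s (ν' s)) (Ici s) s :=
      fun s hs => (hν'd s hs.1).mono (Ici_subset_Ici.mpr hs.1)
    have hd2 : ∀ s ∈ Ico (0:ℝ) t, HasDerivWithinAt ν (v s (ν s)) (Ici s) s :=
      fun s hs => (hkey s hs.1).mono (Ici_subset_Ici.mpr hs.1)
    have hc1 : ContinuousOn ν' (Icc 0 t) :=
      fun s hs => ((hν'd s hs.1).continuousWithinAt).mono (fun u hu => hu.1)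
    have hc2 : ContinuousOn ν (Icc 0 t) := hνcont.mono (fun u hu => hu.1)
    exact huniq t ν' ν hc1 hd1 hc2 hd2 (by rw [hν'0, hν0]) ⟨ht, le_rfl⟩
end

section
/- Solutions of the Wilson–Cowan equation depend continuously on their initial data: if ν and ν̃ are continuously differentiable maps ℝ≥0 → L²(D) satisfying τ ν′(t) = −ν(t) + F(ν(t), t) and τ ν̃′(t) = −ν̃(t) + F(ν̃(t), t) for all t ≥ 0, then for all t ≥ 0 one has ‖ν(t) − ν̃(t)‖_{L²(D)} ≤ exp((1 + L‖w‖_{L²(D×D)}) t / τ) ‖ν(0) − ν̃(0)‖_{L²(D)}. -/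
open MeasureTheory Set
open scoped NNReal ENNReal

private lemma elp2 {α : Type*} [MeasurableSpace α] (μ : Measure α) (f : α → ℝ) :
    eLpNorm f 2 μ = (∫⁻ x, (‖f x‖₊ : ℝ≥0∞) ^ (2 : ℕ) ∂μ) ^ ((2 : ℝ)⁻¹) := by
  rw [eLpNorm_eq_lintegral_rpow_enorm_toReal two_ne_zero ENNReal.ofNat_ne_top]
  congr 1
  · refine lintegral_congr fun x => ?_
    rw [ENNReal.toReal_ofNat, ← ENNReal.rpow_natCast]
    norm_num
    rfl
  · rw [ENNReal.toReal_ofNat, one_div]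

private lemma nemytskii_lip {α : Type*} [MeasurableSpace α] {μ : Measure α} [SFinite μ]
    (f : ℝ → ℝ) (L : ℝ≥0) (hfLip : LipschitzWith L f)
    (w : α → α → ℝ)
    (hw : MemLp (fun p : α × α => w p.1 p.2) 2 (μ.prod μ))
    (g h k Fg Fh : Lp ℝ 2 μ)
    (hFg : ⇑Fg =ᵐ[μ] fun x => f ((∫ y, w x y * g y ∂μ) + k x))
    (hFh : ⇑Fh =ᵐ[μ] fun x => f ((∫ y, w x y * h y ∂μ) + k x)) :
    ‖Fg - Fh‖ ≤
      (L : ℝ) * (eLpNorm (fun p : α × α => w p.1 p.2) 2 (μ.prod μ)).toReal * ‖g - h‖ := by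
  set W : α × α → ℝ := fun p => w p.1 p.2 with hW
  set A : ℝ≥0∞ := eLpNorm W 2 (μ.prod μ) with hAdef
  have hA : A ≠ ∞ := hw.2.ne
  set G : α × α → ℝ≥0∞ := fun p => (‖W p‖₊ : ℝ≥0∞) ^ (2 : ℕ) with hG
  have hGm : AEMeasurable G (μ.prod μ) := hw.1.enorm.pow_const 2
  have hGA : ∫⁻ p, G p ∂(μ.prod μ) = A ^ (2 : ℝ) := by
    rw [hAdef, elp2, ← ENNReal.rpow_mul]
    norm_num
    rfl
  have key_fin : ∫⁻ p, G p ∂(μ.prod μ) ≠ ∞ := by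
    rw [hGA]; exact ENNReal.rpow_ne_top_of_nonneg (by norm_num) hA
  -- a.e. slice finiteness
  have hfin : ∀ᵐ x ∂μ, ∫⁻ y, G (x, y) ∂μ < ∞ := by
    have h1 : ∫⁻ x, ∫⁻ y, hGm.mk G (x, y) ∂μ ∂μ ≠ ∞ := by
      rw [← lintegral_prod _ hGm.measurable_mk.aemeasurable,
        ← lintegral_congr_ae hGm.ae_eq_mk]
      exact key_fin
    have h2 := ae_lt_top hGm.measurable_mk.lintegral_prod_right' h1
    filter_upwards [h2, Measure.ae_ae_of_ae_prod hGm.ae_eq_mk] with x hx hx2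
    rwa [lintegral_congr_ae hx2]
  have hslice : ∀ᵐ x ∂μ, MemLp (fun y => w x y) 2 μ := by
    filter_upwards [hfin, hw.1.prodMk_left] with x h1 h2
    refine ⟨h2, ?_⟩
    rw [elp2]
    exact ENNReal.rpow_lt_top_of_nonneg (by norm_num) h1.ne
  set u : Lp ℝ 2 μ := g - h with hu
  set c : ℝ := (L : ℝ) * ‖u‖ with hc
  have hc0 : 0 ≤ c := mul_nonneg L.coe_nonneg (norm_nonneg _)
  set Φ : α → ℝ := fun x => (eLpNorm (fun y => w x y) 2 μ).toReal with hΦ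
  -- pointwise a.e. bound
  have hpt : ∀ᵐ x ∂μ, ‖(⇑(Fg - Fh)) x‖ ≤ ‖c * Φ x‖ := by
    filter_upwards [hslice, hFg, hFh, Lp.coeFn_sub Fg Fh] with x hx hgx hhx hsub
    have hWx := hx.coeFn_toLp
    set Wx : Lp ℝ 2 μ := hx.toLp _ with hWxdef
    have e1 : ∫ y, w x y * g y ∂μ = inner (𝕜 := ℝ) Wx g := by
      rw [L2.inner_def]
      refine integral_congr_ae ?_
      filter_upwards [hWx] with y hy
      simp [hy, RCLike.inner_apply, conj_trivial, mul_comm]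
    have e2 : ∫ y, w x y * h y ∂μ = inner (𝕜 := ℝ) Wx h := by
      rw [L2.inner_def]
      refine integral_congr_ae ?_
      filter_upwards [hWx] with y hy
      simp [hy, RCLike.inner_apply, conj_trivial, mul_comm]
    have hdist : ‖(⇑(Fg - Fh)) x‖ ≤
        (L : ℝ) * |(∫ y, w x y * g y ∂μ) - ∫ y, w x y * h y ∂μ| := by
      rw [hsub]
      simp only [Pi.sub_apply]
      rw [hgx, hhx, Real.norm_eq_abs]
      have := hfLip.dist_le_mul ((∫ y, w x y * g y ∂μ) + k x)
        ((∫ y, w x y * h y ∂μ) + k x)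
      rw [Real.dist_eq, Real.dist_eq] at this
      simpa using this
    have hCS : |(∫ y, w x y * g y ∂μ) - ∫ y, w x y * h y ∂μ| ≤ Φ x * ‖u‖ := by
      rw [e1, e2, ← inner_sub_right]
      have := abs_real_inner_le_norm Wx (g - h)
      rw [Lp.norm_toLp] at this
      exact this
    calc ‖(⇑(Fg - Fh)) x‖ ≤ (L : ℝ) * (Φ x * ‖u‖) :=
          hdist.trans (by gcongr)
      _ = c * Φ x := by ring
      _ ≤ ‖c * Φ x‖ := le_abs_self _
  have h1 : eLpNorm (⇑(Fg - Fh)) 2 μ ≤ eLpNorm (fun x => c * Φ x) 2 μ :=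
    eLpNorm_mono_ae hpt
  have h2 : eLpNorm (fun x => c * Φ x) 2 μ = (‖c‖₊ : ℝ≥0∞) * eLpNorm Φ 2 μ := by
    have : (fun x => c * Φ x) = c • Φ := by funext x; simp [smul_eq_mul]
    rw [this, eLpNorm_const_smul, enorm_eq_nnnorm]
  have h3 : eLpNorm Φ 2 μ = A := by
    have hsq : ∀ᵐ x ∂μ, ((‖Φ x‖₊ : ℝ≥0∞)) ^ (2 : ℕ) = ∫⁻ y, G (x, y) ∂μ := by
      filter_upwards [hfin] with x hx
      have hWfin : eLpNorm (fun y => w x y) 2 μ ≠ ∞ := by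
        rw [elp2]
        exact (ENNReal.rpow_lt_top_of_nonneg (by norm_num) hx.ne).ne
      have hb : (‖Φ x‖₊ : ℝ≥0∞) = eLpNorm (fun y => w x y) 2 μ := by
        rw [hΦ]
        rw [← enorm_eq_nnnorm, Real.enorm_eq_ofReal ENNReal.toReal_nonneg, ENNReal.ofReal_toReal hWfin]
      rw [hb, elp2, ← ENNReal.rpow_natCast _ 2, ← ENNReal.rpow_mul]
      norm_num
      rfl
    rw [elp2, lintegral_congr_ae hsq, ← lintegral_prod _ hGm, hGA, ← ENNReal.rpow_mul]
    norm_num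
  have hfinal : eLpNorm (⇑(Fg - Fh)) 2 μ ≤ (‖c‖₊ : ℝ≥0∞) * A := by
    rw [← h3, ← h2]; exact h1
  have h4 : ‖Fg - Fh‖ ≤ ((‖c‖₊ : ℝ≥0∞) * A).toReal := by
    rw [Lp.norm_def]
    exact ENNReal.toReal_mono
      (ENNReal.mul_ne_top ENNReal.coe_ne_top hA) hfinal
  calc ‖Fg - Fh‖ ≤ ((‖c‖₊ : ℝ≥0∞) * A).toReal := h4
    _ = c * A.toReal := by
        rw [ENNReal.toReal_mul, ENNReal.coe_toReal, coe_nnnorm,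
          Real.norm_of_nonneg hc0]
    _ = (L : ℝ) * A.toReal * ‖g - h‖ := by rw [hc, hu]; ring

/-- Continuous dependence on initial data for the Wilson–Cowan equation:
if `ν` and `ν̃` are C¹ solutions of `τ ν' = −ν + F(ν,t)` on `ℝ≥0`, then
`‖ν(t) − ν̃(t)‖ ≤ exp((1 + L‖w‖_{L²(D×D)}) t / τ) ‖ν(0) − ν̃(0)‖` for all `t ≥ 0`. -/
theorem wilson_cowan_continuous_dependence
    {d : ℕ} (D : Set (EuclideanSpace ℝ (Fin d)))
    (hDmeas : MeasurableSet D) (hDbdd : Bornology.IsBounded D)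
    (f : ℝ → ℝ) (L : ℝ≥0) (hfLip : LipschitzWith L f)
    (M : ℝ) (hfBdd : ∀ z : ℝ, |f z| ≤ M)
    (w : EuclideanSpace ℝ (Fin d) → EuclideanSpace ℝ (Fin d) → ℝ)
    (hw : MemLp (fun p : EuclideanSpace ℝ (Fin d) × EuclideanSpace ℝ (Fin d) => w p.1 p.2) 2
      ((volume.restrict D).prod (volume.restrict D)))
    (I : ℝ → Lp ℝ 2 (volume.restrict D)) (hI : ContinuousOn I (Set.Ici 0))
    (F : Lp ℝ 2 (volume.restrict D) → ℝ → Lp ℝ 2 (volume.restrict D))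
    (hF : ∀ (g : Lp ℝ 2 (volume.restrict D)) (t : ℝ),
      (F g t : EuclideanSpace ℝ (Fin d) → ℝ) =ᵐ[volume.restrict D]
        fun x => f ((∫ y in D, w x y * g y) + I t x))
    (τ : ℝ) (hτ : 0 < τ)
    (ν ν' : ℝ → Lp ℝ 2 (volume.restrict D))
    (hν : ∀ t ∈ Set.Ici (0 : ℝ),
      HasDerivWithinAt ν (τ⁻¹ • (-ν t + F (ν t) t)) (Set.Ici 0) t)
    (hν' : ∀ t ∈ Set.Ici (0 : ℝ),
      HasDerivWithinAt ν' (τ⁻¹ • (-ν' t + F (ν' t) t)) (Set.Ici 0) t) :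
    ∀ t ∈ Set.Ici (0 : ℝ),
      ‖ν t - ν' t‖ ≤
        Real.exp ((1 + (L : ℝ) * (eLpNorm
            (fun p : EuclideanSpace ℝ (Fin d) × EuclideanSpace ℝ (Fin d) => w p.1 p.2) 2
            ((volume.restrict D).prod (volume.restrict D))).toReal) * t / τ) *
          ‖ν 0 - ν' 0‖ := by
  set C : ℝ := (L : ℝ) * (eLpNorm
      (fun p : EuclideanSpace ℝ (Fin d) × EuclideanSpace ℝ (Fin d) => w p.1 p.2) 2
      ((volume.restrict D).prod (volume.restrict D))).toReal with hC
  have hC0 : 0 ≤ C :=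
    mul_nonneg L.coe_nonneg ENNReal.toReal_nonneg
  have key : ∀ t : ℝ, ‖F (ν t) t - F (ν' t) t‖ ≤ C * ‖ν t - ν' t‖ := fun t =>
    nemytskii_lip f L hfLip w hw (ν t) (ν' t) (I t) _ _ (hF (ν t) t) (hF (ν' t) t)
  set K : ℝ := (1 + C) / τ with hK
  -- derivative of the difference
  have hderiv : ∀ t ∈ Set.Ici (0 : ℝ),
      HasDerivWithinAt (fun s => ν s - ν' s)
        (τ⁻¹ • ((-ν t + F (ν t) t) - (-ν' t + F (ν' t) t))) (Set.Ici 0) t := by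
    intro t ht
    have := (hν t ht).sub (hν' t ht)
    rwa [← smul_sub] at this
  -- norm bound on the derivative
  have hbound : ∀ t ∈ Set.Ici (0 : ℝ),
      ‖τ⁻¹ • ((-ν t + F (ν t) t) - (-ν' t + F (ν' t) t))‖ ≤
        K * ‖ν t - ν' t‖ + 0 := by
    intro t _
    rw [add_zero, norm_smul, norm_inv, Real.norm_of_nonneg hτ.le]
    have e : (-ν t + F (ν t) t) - (-ν' t + F (ν' t) t) =
        (F (ν t) t - F (ν' t) t) - (ν t - ν' t) := by abel
    rw [e]
    have h1 : ‖(F (ν t) t - F (ν' t) t) - (ν t - ν' t)‖ ≤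
        C * ‖ν t - ν' t‖ + ‖ν t - ν' t‖ :=
      (norm_sub_le _ _).trans (add_le_add_left (key t) _)
    calc τ⁻¹ * ‖(F (ν t) t - F (ν' t) t) - (ν t - ν' t)‖
        ≤ τ⁻¹ * (C * ‖ν t - ν' t‖ + ‖ν t - ν' t‖) := by
          exact mul_le_mul_of_nonneg_left h1 (inv_nonneg.2 hτ.le)
      _ = K * ‖ν t - ν' t‖ := by rw [hK]; field_simp; ring
  intro t ht
  have hIcc : Set.Icc (0 : ℝ) t ⊆ Set.Ici 0 := Set.Icc_subset_Ici_self
  have hcont : ContinuousOn (fun s => ν s - ν' s) (Set.Icc 0 t) := fun s hs =>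
    ((hderiv s hs.1).continuousWithinAt).mono hIcc
  have hf' : ∀ x ∈ Set.Ico (0 : ℝ) t,
      HasDerivWithinAt (fun s => ν s - ν' s)
        (τ⁻¹ • ((-ν x + F (ν x) x) - (-ν' x + F (ν' x) x))) (Set.Ici x) x :=
    fun x hx => (hderiv x hx.1).mono (Set.Ici_subset_Ici.2 hx.1)
  have := norm_le_gronwallBound_of_norm_deriv_right_le hcont hf' le_rfl
    (fun x hx => hbound x hx.1) t ⟨ht, le_rfl⟩
  rw [gronwallBound_ε0, sub_zero] at this
  calc ‖ν t - ν' t‖ ≤ ‖ν 0 - ν' 0‖ * Real.exp (K * (t : ℝ)) := this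
    _ = Real.exp ((1 + C) * t / τ) * ‖ν 0 - ν' 0‖ := by
        rw [mul_comm]; congr 1; rw [hK]; ring
end

section
/- Invariance of the physiological range: assume in addition that f is nonnegative, and let ν be the solution of the Wilson–Cowan equation with initial datum ν₀ ∈ L²(D) satisfying 0 ≤ ν₀(x) ≤ ‖f‖₀ for almost all x ∈ D. Then for every t ≥ 0 one has 0 ≤ ν(t)(x) ≤ ‖f‖₀ for almost all x ∈ D. If moreover 0 < f(z) < ‖f‖₀ for all z ∈ ℝ, then for every t > 0 one has 0 < ν(t)(x) < ‖f‖₀ for almost all x ∈ D. -/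
set_option maxHeartbeats 1000000


open MeasureTheory Set Filter
open scoped NNReal ENNReal RealInnerProductSpace

section helpers

variable {α : Type*} {m : MeasurableSpace α} {μ : Measure α}

lemma pos_setIntegral {A : Set α} (hApos : 0 < μ A) {u : α → ℝ} (hu : Integrable u μ)
    (hpos : ∀ᵐ x ∂μ, 0 < u x) : 0 < ∫ x in A, u x ∂μ := by
  rw [setIntegral_pos_iff_support_of_nonneg_ae
    (ae_restrict_of_ae (hpos.mono fun x hx => hx.le)) hu.integrableOn]
  have hnull : μ (A \ Function.support u) = 0 := by
    refine measure_mono_null (fun x hx => ?_) (ae_iff.mp hpos)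
    simp only [mem_setOf_eq, not_lt]
    have : u x = 0 := by simpa [Function.mem_support] using hx.2
    simp [this]
  calc 0 < μ A := hApos
    _ ≤ μ ((Function.support u ∩ A) ∪ (A \ Function.support u)) := by
        refine measure_mono fun x hx => ?_
        by_cases hs : x ∈ Function.support u
        · exact Or.inl ⟨hs, hx⟩
        · exact Or.inr ⟨hx, hs⟩
    _ ≤ μ (Function.support u ∩ A) + μ (A \ Function.support u) := measure_union_le _ _
    _ = μ (Function.support u ∩ A) := by rw [hnull, add_zero]

variable [IsFiniteMeasure μ]

/-- Invariance of the interval `[0, M]` for the abstract linear-decay ODE `τ ν' = -ν + G t`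
when the forcing `G` takes values in `[0, M]` a.e. -/
lemma wc_invariance_aux (M : ℝ) (hM0 : 0 ≤ M)
    (G : ℝ → Lp ℝ 2 μ)
    (hGK : ∀ t : ℝ, ∀ᵐ x ∂μ, 0 ≤ G t x ∧ G t x ≤ M)
    (τ : ℝ) (hτ : 0 < τ)
    (ν : ℝ → Lp ℝ 2 μ)
    (hν : ∀ t ∈ Set.Ici (0 : ℝ), HasDerivWithinAt ν (τ⁻¹ • (-ν t + G t)) (Set.Ici 0) t)
    (hν₀ : ∀ᵐ x ∂μ, 0 ≤ ν 0 x ∧ ν 0 x ≤ M) :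
    ∀ t ∈ Set.Ici (0 : ℝ), ∀ᵐ x ∂μ, 0 ≤ ν t x ∧ ν t x ≤ M := by
  set C : Lp ℝ 2 μ := (memLp_const M).toLp (fun _ => M) with hCdef
  have hC : ⇑C =ᵐ[μ] fun _ => M := (memLp_const M).coeFn_toLp
  set K : Set (Lp ℝ 2 μ) := Icc 0 C with hKdef
  have hKmem : ∀ u : Lp ℝ 2 μ, u ∈ K ↔ ∀ᵐ x ∂μ, 0 ≤ u x ∧ u x ≤ M := by
    intro u
    constructor
    · rintro ⟨h0, hCle⟩
      have h1 := (Lp.coeFn_nonneg u).2 h0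
      have h2 := (Lp.coeFn_le u C).2 hCle
      filter_upwards [h1, h2, hC] with x hx1 hx2 hx3
      exact ⟨hx1, le_of_le_of_eq hx2 hx3⟩
    · intro h
      constructor
      · exact (Lp.coeFn_nonneg u).1 (h.mono fun x hx => hx.1)
      · refine (Lp.coeFn_le u C).1 ?_
        filter_upwards [h, hC] with x hx1 hx2
        rw [hx2]; exact hx1.2
  have hKclosed : IsClosed K := isClosed_Icc
  have hC0 : (0 : Lp ℝ 2 μ) ∈ K := by
    rw [hKmem]
    filter_upwards [Lp.coeFn_zero (E := ℝ) (p := 2) (μ := μ)] with x hx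
    rw [hx]; exact ⟨le_refl _, hM0⟩
  have hKne : K.Nonempty := ⟨0, hC0⟩
  have hGKmem : ∀ t : ℝ, G t ∈ K := fun t => (hKmem _).2 (hGK t)
  have hKconv : ∀ u ∈ K, ∀ v ∈ K, ∀ a b : ℝ, 0 ≤ a → 0 ≤ b → a + b = 1 →
      a • u + b • v ∈ K := by
    intro u hu v hv a b ha hb hab
    rw [hKmem] at hu hv ⊢
    filter_upwards [hu, hv, Lp.coeFn_add (a • u) (b • v), Lp.coeFn_smul a u,
      Lp.coeFn_smul b v] with x hx1 hx2 hx3 hx4 hx5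
    rw [hx3]
    simp only [Pi.add_apply]
    rw [hx4, hx5]
    simp only [Pi.smul_apply, smul_eq_mul]
    constructor
    · nlinarith [hx1.1, hx2.1]
    · nlinarith [hx1.2, hx2.2]
  have hν0K : ν 0 ∈ K := (hKmem _).2 hν₀
  have hνcont : ContinuousOn ν (Ici 0) := fun s hs => (hν s hs).continuousWithinAt
  -- distance to K
  set dd : ℝ → ℝ := fun s => Metric.infDist (ν s) K with hdd
  -- the slope estimate
  have slopeEst : ∀ x ∈ Ici (0:ℝ), ∀ r : ℝ, -(τ⁻¹ * dd x) < r →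
      ∃ᶠ z in nhdsWithin x (Ioi x), slope dd x z < r := by
    intro x hx r hr
    have hderiv := hν x hx
    rw [hasDerivWithinAt_iff_tendsto_slope] at hderiv
    have hsub : nhdsWithin x (Ioi x) ≤ nhdsWithin x (Ici (0:ℝ) \ {x}) :=
      nhdsWithin_mono x (fun z hz => ⟨show (0:ℝ) ≤ z from le_trans hx (le_of_lt hz), ne_of_gt hz⟩)
    have hslope : Tendsto (slope ν x) (nhdsWithin x (Ioi x))
        (nhds (τ⁻¹ • (-ν x + G x))) := hderiv.mono_left hsub
    set v : Lp ℝ 2 μ := τ⁻¹ • (-ν x + G x) with hv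
    set φ : ℝ → ℝ := fun z => ‖slope ν x z - v‖ - τ⁻¹ * dd x + (z - x) * (1 - (z - x) * τ⁻¹)
      with hφdef
    have h1 : Tendsto (fun z => ‖slope ν x z - v‖) (nhdsWithin x (Ioi x)) (nhds 0) := by
      have := (hslope.sub (tendsto_const_nhds (x := v))).norm
      simpa using this
    have h2 : Tendsto (fun z : ℝ => z - x) (nhdsWithin x (Ioi x)) (nhds 0) := by
      have : Tendsto (fun z : ℝ => z - x) (nhds x) (nhds (x - x)) :=
        (continuous_id.sub continuous_const).tendsto x
      rw [sub_self] at this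
      exact this.mono_left nhdsWithin_le_nhds
    have hφ : Tendsto φ (nhdsWithin x (Ioi x)) (nhds (-(τ⁻¹ * dd x))) := by
      have h3 : Tendsto (fun z : ℝ => 1 - (z - x) * τ⁻¹) (nhdsWithin x (Ioi x))
          (nhds (1 - 0 * τ⁻¹)) :=
        tendsto_const_nhds.sub (h2.mul tendsto_const_nhds)
      have h4 : Tendsto (fun z : ℝ => (z - x) * (1 - (z - x) * τ⁻¹)) (nhdsWithin x (Ioi x))
          (nhds (0 * (1 - 0 * τ⁻¹))) := h2.mul h3
      have h5 : Tendsto (fun z : ℝ => ‖slope ν x z - v‖ - τ⁻¹ * dd x) (nhdsWithin x (Ioi x))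
          (nhds (0 - τ⁻¹ * dd x)) := h1.sub tendsto_const_nhds
      have h6 := h5.add h4
      simpa using h6
    have hlt : ∀ᶠ z in nhdsWithin x (Ioi x), φ z < r := hφ.eventually (eventually_lt_nhds hr)
    have hsl : ∀ᶠ z in nhdsWithin x (Ioi x), slope dd x z ≤ φ z := by
      have hmem : Ioo x (x + τ) ∈ nhdsWithin x (Ioi x) :=
        Ioo_mem_nhdsGT_of_mem ⟨le_refl x, by linarith⟩
      filter_upwards [hmem] with z hz
      obtain ⟨hz1, hz2⟩ := hz
      have hh : 0 < z - x := sub_pos.2 hz1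
      have hhτ : z - x < τ := by linarith
      have hθ0 : 0 ≤ (z - x) * τ⁻¹ := by positivity
      have hθ1 : (z - x) * τ⁻¹ < 1 := by
        have h7 := mul_lt_mul_of_pos_right hhτ (inv_pos.2 hτ)
        rwa [mul_inv_cancel₀ hτ.ne'] at h7
      have hdlt : Metric.infDist (ν x) K < dd x + (z - x) ^ 2 :=
        lt_add_of_pos_right _ (pow_pos hh 2)
      obtain ⟨q, hqK, hq⟩ := (Metric.infDist_lt_iff hKne).1 hdlt
      rw [dist_eq_norm] at hq
      have hqhK : (1 - (z - x) * τ⁻¹) • q + ((z - x) * τ⁻¹) • G x ∈ K :=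
        hKconv q hqK (G x) (hGKmem x) _ _ (by linarith) hθ0 (by ring)
      have hsmul : (z - x) • slope ν x z = ν z - ν x := by
        rw [slope, smul_smul, mul_inv_cancel₀ hh.ne', one_smul, vsub_eq_sub]
      have halg : ν z - ((1 - (z - x) * τ⁻¹) • q + ((z - x) * τ⁻¹) • G x)
          = (z - x) • (slope ν x z - v) + (1 - (z - x) * τ⁻¹) • (ν x - q) := by
        rw [smul_sub, hsmul, hv]
        module
      have hnorm : ‖ν z - ((1 - (z - x) * τ⁻¹) • q + ((z - x) * τ⁻¹) • G x)‖
          ≤ (z - x) * ‖slope ν x z - v‖ + (1 - (z - x) * τ⁻¹) * ‖ν x - q‖ := by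
        rw [halg]
        refine (norm_add_le _ _).trans ?_
        rw [norm_smul, norm_smul, Real.norm_eq_abs, Real.norm_eq_abs,
          abs_of_pos hh, abs_of_nonneg (by linarith : (0:ℝ) ≤ 1 - (z - x) * τ⁻¹)]
      have hdz : dd z ≤ (z - x) * ‖slope ν x z - v‖ + (1 - (z - x) * τ⁻¹) * ‖ν x - q‖ := by
        refine le_trans ?_ hnorm
        rw [← dist_eq_norm]
        exact Metric.infDist_le_dist_of_mem hqhK
      have hmul : (1 - (z - x) * τ⁻¹) * ‖ν x - q‖
          ≤ (1 - (z - x) * τ⁻¹) * (dd x + (z - x) ^ 2) :=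
        mul_le_mul_of_nonneg_left hq.le (by linarith)
      have hφz : φ z = ‖slope ν x z - v‖ - τ⁻¹ * dd x + (z - x) * (1 - (z - x) * τ⁻¹) := rfl
      rw [slope_def_field, div_le_iff₀ hh, hφz]
      generalize hN : ‖slope ν x z - v‖ = N at hdz
      generalize hQ : ‖ν x - q‖ = Q at hdz hmul
      generalize hd1 : dd z = d1 at hdz
      generalize hd2 : dd x = d2 at hdz hmul
      nlinarith [hdz, hmul]
    refine ((hlt.and hsl).mono fun z hz => lt_of_le_of_lt hz.2 hz.1).frequently
  -- fencing
  intro T hT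
  have hdT : dd T ≤ 0 := by
    have key : ∀ ε : ℝ, 0 < ε → dd T ≤ ε := by
      intro ε hε
      have happ := image_le_of_liminf_slope_right_lt_deriv_boundary'
        (f := dd) (f' := fun s => -(τ⁻¹ * dd s)) (a := 0) (b := T)
        (B := fun _ => ε) (B' := fun _ => 0)
        ((Metric.continuous_infDist_pt K).comp_continuousOn
          (hνcont.mono (fun z hz => hz.1)))
        (fun z hz => slopeEst z hz.1)
        (by show dd 0 ≤ ε
            have h9 : dd 0 = 0 := Metric.infDist_zero_of_mem hν0K
            rw [h9]; exact hε.le)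
        continuousOn_const
        (fun z _ => hasDerivWithinAt_const z _ ε)
        (fun z _ hzB => by
          have hz : dd z = ε := hzB
          show -(τ⁻¹ * dd z) < 0
          rw [hz]
          have : 0 < τ⁻¹ * ε := by positivity
          linarith)
      exact happ ⟨hT, le_refl T⟩
    have h8 : ∀ ε : ℝ, 0 < ε → dd T ≤ 0 + ε := by intro ε hε; simpa using key ε hε
    simpa using le_of_forall_pos_le_add h8
  have hmemK : ν T ∈ K :=
    (hKclosed.mem_iff_infDist_zero hKne).2 (le_antisymm hdT Metric.infDist_nonneg)
  exact (hKmem _).1 hmemK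

lemma wc_pos_aux (G : ℝ → Lp ℝ 2 μ)
    (hGpos : ∀ s : ℝ, 0 ≤ s → ∀ᵐ x ∂μ, 0 < G s x)
    (τ : ℝ) (hτ : 0 < τ)
    (ν : ℝ → Lp ℝ 2 μ)
    (hν : ∀ s ∈ Set.Ici (0 : ℝ), HasDerivWithinAt ν (τ⁻¹ • (-ν s + G s)) (Set.Ici 0) s)
    (hν0 : ∀ᵐ x ∂μ, 0 ≤ ν 0 x)
    (t : ℝ) (ht : 0 < t) :
    ∀ᵐ x ∂μ, 0 < ν t x := by
  have hgmeas : StronglyMeasurable (⇑(ν t)) := Lp.stronglyMeasurable (ν t)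
  set A : Set α := {x | ν t x ≤ 0} with hA
  have hAmeas : MeasurableSet A := hgmeas.measurableSet_le stronglyMeasurable_const
  by_cases hA0 : μ A = 0
  · have h1 : ∀ᵐ x ∂μ, x ∉ A := measure_eq_zero_iff_ae_notMem.1 hA0
    filter_upwards [h1] with x hx
    simpa [hA, not_le] using hx
  exfalso
  have hApos : 0 < μ A := lt_of_le_of_ne zero_le (Ne.symm hA0)
  have hAfin : μ A ≠ ⊤ := measure_ne_top μ A
  set χ : Lp ℝ 2 μ := indicatorConstLp 2 hAmeas hAfin (1 : ℝ) with hχ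
  have hinner : ∀ u : Lp ℝ 2 μ, ⟪χ, u⟫ = ∫ x in A, u x ∂μ := by
    intro u
    rw [hχ, L2.inner_indicatorConstLp_eq_setIntegral_inner ℝ u hAmeas (1 : ℝ) hAfin]
    refine setIntegral_congr_ae hAmeas (Eventually.of_forall fun x _ => ?_)
    simp [RCLike.inner_apply]
  set ψ : ℝ → ℝ := fun s => ⟪χ, ν s⟫ with hψ
  have hψderiv : ∀ s ∈ Set.Ici (0 : ℝ),
      HasDerivWithinAt ψ (τ⁻¹ * (-ψ s + ⟪χ, G s⟫)) (Set.Ici 0) s := by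
    intro s hs
    have h := (innerSL ℝ χ).hasFDerivAt.comp_hasDerivWithinAt s (hν s hs)
    refine h.congr_deriv ?_
    simp only [innerSL_apply_apply, inner_smul_right, inner_add_right, inner_neg_right]
    rfl
  set h : ℝ → ℝ := fun s => Real.exp (s * τ⁻¹) * ψ s with hh
  have hhderiv : ∀ s ∈ Set.Ici (0 : ℝ),
      HasDerivWithinAt h (Real.exp (s * τ⁻¹) * (τ⁻¹ * ⟪χ, G s⟫)) (Set.Ici 0) s := by
    intro s hs
    have he : HasDerivWithinAt (fun u : ℝ => Real.exp (u * τ⁻¹))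
        (Real.exp (s * τ⁻¹) * τ⁻¹) (Set.Ici 0) s := by
      have h2 := ((Real.hasDerivAt_exp (s * τ⁻¹)).comp s
        ((hasDerivAt_id s).mul_const τ⁻¹)).hasDerivWithinAt (s := Set.Ici 0)
      simpa [Function.comp_def] using h2
    have h3 := he.mul (hψderiv s hs)
    refine h3.congr_deriv ?_
    ring
  have hcpos : ∀ s ∈ Set.Ici (0 : ℝ), 0 < ⟪χ, G s⟫ := by
    intro s hs
    rw [hinner]
    exact pos_setIntegral hApos ((Lp.memLp (G s)).integrable (by norm_num)) (hGpos s hs)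
  have hνcont : ContinuousOn ν (Ici 0) := fun s hs => (hν s hs).continuousWithinAt
  have hcont : ContinuousOn h (Icc 0 t) := by
    refine ContinuousOn.mul ?_ ?_
    · exact (Real.continuous_exp.comp (continuous_id.mul continuous_const)).continuousOn
    · exact (innerSL ℝ χ).continuous.comp_continuousOn (hνcont.mono fun z hz => hz.1)
  have hmono : StrictMonoOn h (Icc 0 t) := by
    refine strictMonoOn_of_deriv_pos (convex_Icc 0 t) hcont ?_
    intro s hs
    rw [interior_Icc] at hs
    have hd : HasDerivAt h (Real.exp (s * τ⁻¹) * (τ⁻¹ * ⟪χ, G s⟫)) s :=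
      (hhderiv s hs.1.le).hasDerivAt (Ici_mem_nhds hs.1)
    rw [hd.deriv]
    have hp := hcpos s hs.1.le
    have hexp := Real.exp_pos (s * τ⁻¹)
    have hτi : (0:ℝ) < τ⁻¹ := inv_pos.2 hτ
    positivity
  have h0t : h 0 < h t := hmono ⟨le_refl 0, ht.le⟩ ⟨ht.le, le_refl t⟩ ht
  have hψ0 : 0 ≤ ψ 0 := by
    have : ψ 0 = ∫ x in A, ν 0 x ∂μ := hinner (ν 0)
    rw [this]
    exact setIntegral_nonneg_of_ae hν0
  have hψt : ψ t ≤ 0 := by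
    have h4 : ψ t = ∫ x in A, ν t x ∂μ := hinner (ν t)
    rw [h4]
    exact setIntegral_nonpos hAmeas fun x hx => hx
  have hh0 : 0 ≤ h 0 := by
    simp only [hh, zero_mul, Real.exp_zero, one_mul]
    exact hψ0
  have hht : h t ≤ 0 := by
    exact mul_nonpos_of_nonneg_of_nonpos (Real.exp_pos _).le hψt
  linarith


/-- Invariance of the physiological range for the Wilson–Cowan equation:
if `f ≥ 0` and `0 ≤ ν₀ ≤ ‖f‖₀` a.e., then `0 ≤ ν(t) ≤ ‖f‖₀` a.e. for all `t ≥ 0`;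
if moreover `0 < f(z) < ‖f‖₀` for all `z`, then `0 < ν(t) < ‖f‖₀` a.e. for all `t > 0`. -/
theorem wilson_cowan_invariance
    {d : ℕ} (D : Set (EuclideanSpace ℝ (Fin d)))
    (hDmeas : MeasurableSet D) (hDbdd : Bornology.IsBounded D)
    (f : ℝ → ℝ) (L : ℝ≥0) (hfLip : LipschitzWith L f)
    (M : ℝ) (hfBdd : ∀ z : ℝ, |f z| ≤ M) (hM : M = ⨆ z : ℝ, |f z|)
    (hfNonneg : ∀ z : ℝ, 0 ≤ f z)
    (w : EuclideanSpace ℝ (Fin d) → EuclideanSpace ℝ (Fin d) → ℝ)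
    (hw : MemLp (fun p : EuclideanSpace ℝ (Fin d) × EuclideanSpace ℝ (Fin d) => w p.1 p.2) 2
      ((volume.restrict D).prod (volume.restrict D)))
    (I : ℝ → Lp ℝ 2 (volume.restrict D)) (hI : ContinuousOn I (Set.Ici 0))
    (F : Lp ℝ 2 (volume.restrict D) → ℝ → Lp ℝ 2 (volume.restrict D))
    (hF : ∀ (g : Lp ℝ 2 (volume.restrict D)) (t : ℝ),
      (F g t : EuclideanSpace ℝ (Fin d) → ℝ) =ᵐ[volume.restrict D]
        fun x => f ((∫ y in D, w x y * g y) + I t x))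
    (τ : ℝ) (hτ : 0 < τ)
    (ν : ℝ → Lp ℝ 2 (volume.restrict D))
    (hν : ∀ t ∈ Set.Ici (0 : ℝ),
      HasDerivWithinAt ν (τ⁻¹ • (-ν t + F (ν t) t)) (Set.Ici 0) t)
    (hν₀ : ∀ᵐ x ∂(volume.restrict D), 0 ≤ ν 0 x ∧ ν 0 x ≤ M) :
    (∀ t ∈ Set.Ici (0 : ℝ),
      ∀ᵐ x ∂(volume.restrict D), 0 ≤ ν t x ∧ ν t x ≤ M) ∧
    ((∀ z : ℝ, 0 < f z ∧ f z < M) →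
      ∀ t : ℝ, 0 < t →
        ∀ᵐ x ∂(volume.restrict D), 0 < ν t x ∧ ν t x < M) := by
  have hDfin : volume D < ⊤ := hDbdd.measure_lt_top
  haveI : IsFiniteMeasure (volume.restrict D) := ⟨by rwa [Measure.restrict_apply_univ]⟩
  have hM0 : 0 ≤ M := (abs_nonneg (f 0)).trans (hfBdd 0)
  have hfM : ∀ z, f z ≤ M := fun z => (le_abs_self _).trans (hfBdd z)
  have hGK : ∀ s : ℝ, ∀ᵐ x ∂(volume.restrict D),
      0 ≤ F (ν s) s x ∧ F (ν s) s x ≤ M := by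
    intro s
    filter_upwards [hF (ν s) s] with x hx
    rw [hx]
    exact ⟨hfNonneg _, hfM _⟩
  have part1 := wc_invariance_aux M hM0 (fun s => F (ν s) s) hGK τ hτ ν hν hν₀
  refine ⟨part1, ?_⟩
  intro hstrict t ht
  -- lower strict bound
  have lower : ∀ᵐ x ∂(volume.restrict D), 0 < ν t x := by
    refine wc_pos_aux (fun s => F (ν s) s) ?_ τ hτ ν hν
      (hν₀.mono fun x hx => hx.1) t ht
    intro s _
    filter_upwards [hF (ν s) s] with x hx
    rw [hx]
    exact (hstrict _).1
  -- upper strict bound, by applying the positivity lemma to `C - ν`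
  have hC : ⇑((memLp_const (μ := volume.restrict D) (p := 2) M).toLp (fun _ => M))
      =ᵐ[volume.restrict D] fun _ => M := (memLp_const M).coeFn_toLp
  set C : Lp ℝ 2 (volume.restrict D) := (memLp_const M).toLp (fun _ => M) with hCdef
  have upper0 : ∀ᵐ x ∂(volume.restrict D), 0 < (C - ν t) x := by
    refine wc_pos_aux (fun s => C - F (ν s) s) ?_ τ hτ (fun s => C - ν s) ?_ ?_ t ht
    · intro s _
      filter_upwards [Lp.coeFn_sub C (F (ν s) s), hC, hF (ν s) s] with x hx1 hx2 hx3
      rw [hx1]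
      simp only [Pi.sub_apply]
      rw [hx2, hx3]
      have := (hstrict ((∫ y in D, w x y * (ν s) y) + I s x)).2
      linarith
    · intro s hs
      have hd := (hasDerivWithinAt_const s (Set.Ici (0:ℝ)) C).sub (hν s hs)
      refine hd.congr_deriv ?_
      module
    · filter_upwards [Lp.coeFn_sub C (ν 0), hC, hν₀] with x hx1 hx2 hx3
      rw [hx1]
      simp only [Pi.sub_apply]
      rw [hx2]
      linarith [hx3.2]
  have upper : ∀ᵐ x ∂(volume.restrict D), ν t x < M := by
    filter_upwards [upper0, Lp.coeFn_sub C (ν t), hC] with x hx1 hx2 hx3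
    rw [hx2] at hx1
    simp only [Pi.sub_apply] at hx1
    rw [hx3] at hx1
    linarith
  filter_upwards [lower, upper] with x hx1 hx2
  exact ⟨hx1, hx2⟩
end helpers
end

section
/- Global a priori bound in L²: the solution ν of the Wilson–Cowan equation with initial datum ν₀ ∈ L²(D) satisfies, for every t ≥ 0, ‖ν(t)‖_{L²(D)} ≤ e^{−t/τ} ‖ν₀‖_{L²(D)} + (1 − e^{−t/τ}) ‖f‖₀ |D|^{1/2}; in particular sup_{t≥0} ‖ν(t)‖_{L²(D)} ≤ max(‖ν₀‖_{L²(D)}, ‖f‖₀ |D|^{1/2}), where |D| denotes the Lebesgue measure of D. -/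
set_option maxHeartbeats 1000000


open MeasureTheory Set
open scoped NNReal ENNReal

/-- Global a priori bound in `L²`: the solution of the Wilson–Cowan
equation satisfies `‖ν(t)‖ ≤ e^{−t/τ}‖ν₀‖ + (1 − e^{−t/τ})‖f‖₀ |D|^{1/2}` for all `t ≥ 0`;
in particular `‖ν(t)‖ ≤ max(‖ν₀‖, ‖f‖₀ |D|^{1/2})` for all `t ≥ 0`. -/
theorem wilson_cowan_a_priori_bound
    {d : ℕ} (D : Set (EuclideanSpace ℝ (Fin d)))
    (hDmeas : MeasurableSet D) (hDbdd : Bornology.IsBounded D)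
    (f : ℝ → ℝ) (L : ℝ≥0) (hfLip : LipschitzWith L f)
    (M : ℝ) (hfBdd : ∀ z : ℝ, |f z| ≤ M) (hM : M = ⨆ z : ℝ, |f z|)
    (w : EuclideanSpace ℝ (Fin d) → EuclideanSpace ℝ (Fin d) → ℝ)
    (hw : MemLp (fun p : EuclideanSpace ℝ (Fin d) × EuclideanSpace ℝ (Fin d) => w p.1 p.2) 2
      ((volume.restrict D).prod (volume.restrict D)))
    (I : ℝ → Lp ℝ 2 (volume.restrict D)) (hI : ContinuousOn I (Set.Ici 0))
    (F : Lp ℝ 2 (volume.restrict D) → ℝ → Lp ℝ 2 (volume.restrict D))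
    (hF : ∀ (g : Lp ℝ 2 (volume.restrict D)) (t : ℝ),
      (F g t : EuclideanSpace ℝ (Fin d) → ℝ) =ᵐ[volume.restrict D]
        fun x => f ((∫ y in D, w x y * g y) + I t x))
    (τ : ℝ) (hτ : 0 < τ)
    (ν : ℝ → Lp ℝ 2 (volume.restrict D))
    (hν : ∀ t ∈ Set.Ici (0 : ℝ),
      HasDerivWithinAt ν (τ⁻¹ • (-ν t + F (ν t) t)) (Set.Ici 0) t) :
    (∀ t ∈ Set.Ici (0 : ℝ),
      ‖ν t‖ ≤ Real.exp (-t / τ) * ‖ν 0‖ +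
        (1 - Real.exp (-t / τ)) * M * Real.sqrt (volume D).toReal) ∧
    (∀ t ∈ Set.Ici (0 : ℝ),
      ‖ν t‖ ≤ max ‖ν 0‖ (M * Real.sqrt (volume D).toReal)) := by
  have hM0 : 0 ≤ M := (abs_nonneg (f 0)).trans (hfBdd 0)
  set C : ℝ := M * Real.sqrt (volume D).toReal with hCdef
  have hC0 : 0 ≤ C := mul_nonneg hM0 (Real.sqrt_nonneg _)
  haveI : IsFiniteMeasure (volume.restrict D) :=
    ⟨by rw [Measure.restrict_apply_univ]; exact hDbdd.measure_lt_top⟩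
  -- uniform bound on F
  have hFnorm : ∀ g t, ‖F g t‖ ≤ C := by
    intro g t
    have hb : ∀ᵐ x ∂(volume.restrict D), ‖(F g t : _ → ℝ) x‖ ≤ M := by
      filter_upwards [hF g t] with x hx
      rw [hx]; exact (Real.norm_eq_abs _) ▸ hfBdd _
    have := Lp.norm_le_of_ae_bound hM0 hb
    refine this.trans (le_of_eq ?_)
    rw [hCdef, mul_comm M]
    congr 1
    rw [measureUnivNNReal, Measure.restrict_apply_univ, Real.sqrt_eq_rpow]
    norm_num
    rfl
  -- continuity of ν on [0,∞)
  have hνcont : ContinuousOn ν (Set.Ici 0) := fun t ht => (hν t ht).continuousWithinAt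
  have key : ∀ t : ℝ, 0 ≤ t →
      ‖ν t‖ ≤ Real.exp (-t / τ) * ‖ν 0‖ + (1 - Real.exp (-t / τ)) * C := by
    intro b hb
    set g : ℝ → Lp ℝ 2 (volume.restrict D) := fun s => Real.exp (s / τ) • ν s with hgdef
    set B : ℝ → ℝ := fun s => ‖ν 0‖ + C * (Real.exp (s / τ) - 1) with hBdef
    have hg' : ∀ s ∈ Set.Ico (0 : ℝ) b,
        HasDerivWithinAt g ((Real.exp (s / τ) * (1 / τ)) • F (ν s) s) (Set.Ici s) s := by
      intro s hs
      have he : HasDerivWithinAt (fun s => Real.exp (s / τ))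
          (Real.exp (s / τ) * (1 / τ)) (Set.Ici s) s := by
        exact (((hasDerivAt_id s).div_const τ).exp).hasDerivWithinAt
      have hνs : HasDerivWithinAt ν (τ⁻¹ • (-ν s + F (ν s) s)) (Set.Ici s) s :=
        (hν s hs.1).mono (Set.Ici_subset_Ici.2 hs.1)
      have := he.smul hνs
      refine this.congr_deriv ?_
      rw [smul_smul, smul_add, smul_neg]
      have hτ' : Real.exp (s / τ) * (1 / τ) = Real.exp (s / τ) * τ⁻¹ := by ring
      rw [hτ', mul_comm (Real.exp (s / τ)) τ⁻¹, ← smul_smul]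
      abel
    have hB' : ∀ s, HasDerivAt B (C * (Real.exp (s / τ) * (1 / τ))) s := by
      intro s
      have : HasDerivAt (fun s => Real.exp (s / τ)) (Real.exp (s / τ) * (1 / τ)) s :=
        ((hasDerivAt_id s).div_const τ).exp
      have h := (hasDerivAt_const s ‖ν 0‖).add (((this.sub_const 1)).const_mul C)
      rw [zero_add] at h
      exact h
    have hgcont : ContinuousOn g (Set.Icc 0 b) := by
      exact ((Real.continuous_exp.comp (continuous_id.div_const τ)).continuousOn).smul
        (hνcont.mono Set.Icc_subset_Ici_self)
    have ha : ‖g 0‖ ≤ B 0 := by simp [hgdef, hBdef]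
    have bound : ∀ s ∈ Set.Ico (0 : ℝ) b,
        ‖(Real.exp (s / τ) * (1 / τ)) • F (ν s) s‖ ≤ C * (Real.exp (s / τ) * (1 / τ)) := by
      intro s hs
      rw [norm_smul, Real.norm_eq_abs]
      have h1 : 0 ≤ Real.exp (s / τ) * (1 / τ) :=
        mul_nonneg (Real.exp_pos _).le (by positivity)
      rw [abs_of_nonneg h1, mul_comm]
      exact mul_le_mul_of_nonneg_right (hFnorm _ _) h1
    have := image_norm_le_of_norm_deriv_right_le_deriv_boundary hgcont hg' ha hB' bound
      (Set.right_mem_Icc.2 hb)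
    -- this : ‖g b‖ ≤ B b
    have hE : (0:ℝ) < Real.exp (b / τ) := Real.exp_pos _
    have hgb : ‖g b‖ = Real.exp (b / τ) * ‖ν b‖ := by
      rw [hgdef]; simp [norm_smul, Real.norm_eq_abs, abs_of_pos hE]
    rw [hgb, hBdef] at this
    have hinv : Real.exp (-b / τ) = (Real.exp (b / τ))⁻¹ := by
      rw [neg_div, Real.exp_neg]
    have h2 : ‖ν b‖ ≤ (‖ν 0‖ + C * (Real.exp (b / τ) - 1)) / Real.exp (b / τ) := by
      rw [le_div_iff₀ hE]; linarith [this]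
    refine h2.trans (le_of_eq ?_)
    rw [hinv]
    field_simp
  constructor
  · intro t ht
    have := key t ht
    calc ‖ν t‖ ≤ Real.exp (-t / τ) * ‖ν 0‖ + (1 - Real.exp (-t / τ)) * C := this
      _ = Real.exp (-t / τ) * ‖ν 0‖ + (1 - Real.exp (-t / τ)) * M * Real.sqrt (volume D).toReal := by
          rw [hCdef]; ring
  · intro t ht
    have h1 := key t ht
    set e := Real.exp (-t / τ) with hedef
    have he1 : e ≤ 1 := by
      rw [hedef]
      exact Real.exp_le_one_iff.2 (by
        apply div_nonpos_of_nonpos_of_nonneg (neg_nonpos.2 ht) hτ.le)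
    have he0 : 0 < e := Real.exp_pos _
    have ha : ‖ν 0‖ ≤ max ‖ν 0‖ C := le_max_left _ _
    have hb : C ≤ max ‖ν 0‖ C := le_max_right _ _
    have : ‖ν t‖ ≤ max ‖ν 0‖ C := by nlinarith
    simpa [hCdef] using this
end
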